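/- Let 𝔄 be a Banach algebra and let 𝔅 be a unital Banach algebra whose only closed two-sided ideals are {0} and 𝔅. Let σ : 𝔄 → 𝔅 be a surjective continuous linear map and let d : 𝔄 → 𝔅 be a σ-derivation. Then either d is continuous or σ is multiplicative (σ(bc) = σ(b)σ(c) for all b, c ∈ 𝔄). -/

import Mathlib

open Filter Topology

/-- **Proposition 2.5.** Let `𝔄` be a Banach algebra, `𝔅` a unital Banach algebra
whose only closed two-sided ideals are `{0}` and `𝔅`, `σ : 𝔄 → 𝔅` a surjective
continuous linear map and `d : 𝔄 → 𝔅` a `σ`-derivation. Then `d` is continuous or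
`σ` is multiplicative. -/
theorem stmt_5 {A B : Type*} [NonUnitalNormedRing A] [NormedSpace ℂ A]
    [CompleteSpace A] [NormedRing B] [NormedAlgebra ℂ B] [CompleteSpace B]
    (hsimple : ∀ I : TwoSidedIdeal B, IsClosed (I : Set B) →
      (I : Set B) = {0} ∨ (I : Set B) = Set.univ)
    (σ d : A →ₗ[ℂ] B) (hσ : Continuous σ) (hσsurj : Function.Surjective σ)
    (hd : ∀ x y : A, d (x * y) = d x * σ y + σ x * d y) :
    Continuous d ∨ ∀ b c : A, σ (b * c) = σ b * σ c := by
  -- The separating space of `d`.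
  set S : Set B := ⋂ n : ℕ, closure (d '' Metric.ball 0 (1 / (n + 1))) with hS
  have hSclosed : IsClosed S := isClosed_iInter fun n => isClosed_closure
  -- sequence characterization of membership in `S`
  have hmem : ∀ b : B, b ∈ S ↔ ∃ f : ℕ → A, Tendsto f atTop (𝓝 0) ∧
      Tendsto (fun n => d (f n)) atTop (𝓝 b) := by
    intro b
    constructor
    · intro hb
      have h' : ∀ n : ℕ, ∃ a : A, ‖a‖ < 1 / (n + 1) ∧ ‖d a - b‖ < 1 / (n + 1) := by
        intro n
        have hb' : b ∈ closure (d '' Metric.ball 0 (1 / (n + 1))) :=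
          Set.mem_iInter.mp hb n
        have hpos : (0 : ℝ) < 1 / (n + 1) := by positivity
        obtain ⟨y, ⟨a, ha, rfl⟩, hy⟩ := Metric.mem_closure_iff.mp hb' _ hpos
        refine ⟨a, ?_, ?_⟩
        · simpa [dist_eq_norm] using ha
        · rw [dist_eq_norm] at hy
          simpa [norm_sub_rev] using hy
      choose f hf1 hf2 using h'
      have hlim : Tendsto (fun n : ℕ => 1 / ((n : ℝ) + 1)) atTop (𝓝 0) :=
        tendsto_one_div_add_atTop_nhds_zero_nat
      refine ⟨f, ?_, ?_⟩
      · rw [tendsto_zero_iff_norm_tendsto_zero]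
        exact squeeze_zero (fun n => norm_nonneg _) (fun n => (hf1 n).le) hlim
      · rw [tendsto_iff_norm_sub_tendsto_zero]
        exact squeeze_zero (fun n => norm_nonneg _) (fun n => (hf2 n).le) hlim
    · rintro ⟨f, hf0, hfb⟩
      refine Set.mem_iInter.mpr fun n => ?_
      refine mem_closure_of_tendsto hfb ?_
      have : ∀ᶠ k in atTop, f k ∈ Metric.ball (0 : A) (1 / (n + 1)) := by
        refine hf0 (Metric.ball_mem_nhds 0 (by positivity))
      exact this.mono fun k hk => Set.mem_image_of_mem _ hk
  -- `S` is a closed two-sided ideal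
  have zero_mem : (0 : B) ∈ S := (hmem 0).mpr ⟨0, tendsto_const_nhds, by
    simpa using (tendsto_const_nhds : Tendsto (fun _ : ℕ => (0 : B)) atTop (𝓝 0))⟩
  have add_mem : ∀ {x y : B}, x ∈ S → y ∈ S → x + y ∈ S := by
    intro x y hx hy
    obtain ⟨f, hf0, hfx⟩ := (hmem x).mp hx
    obtain ⟨g, hg0, hgy⟩ := (hmem y).mp hy
    refine (hmem _).mpr ⟨f + g, by simpa [Pi.add_def] using hf0.add hg0, ?_⟩
    simpa using hfx.add hgy
  have neg_mem : ∀ {x : B}, x ∈ S → -x ∈ S := by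
    intro x hx
    obtain ⟨f, hf0, hfx⟩ := (hmem x).mp hx
    refine (hmem _).mpr ⟨-f, by simpa [Pi.neg_def] using hf0.neg, ?_⟩
    simpa using hfx.neg
  have mul_mem_left : ∀ {x y : B}, y ∈ S → x * y ∈ S := by
    intro x y hy
    obtain ⟨a, rfl⟩ := hσsurj x
    obtain ⟨f, hf0, hfy⟩ := (hmem y).mp hy
    refine (hmem _).mpr ⟨fun n => a * f n, ?_, ?_⟩
    · simpa using (tendsto_const_nhds : Tendsto (fun _ : ℕ => a) atTop (𝓝 a)).mul hf0
    · have h1 : Tendsto (fun n => d a * σ (f n) + σ a * d (f n)) atTop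
          (𝓝 (d a * σ (0 : A) + σ a * y)) := by
        exact ((tendsto_const_nhds.mul ((hσ.tendsto 0).comp hf0))).add
          (tendsto_const_nhds.mul hfy)
      simp only [map_zero, mul_zero, zero_add] at h1
      simpa only [hd] using h1
  have mul_mem_right : ∀ {x y : B}, x ∈ S → x * y ∈ S := by
    intro x y hx
    obtain ⟨a, rfl⟩ := hσsurj y
    obtain ⟨f, hf0, hfx⟩ := (hmem x).mp hx
    refine (hmem _).mpr ⟨fun n => f n * a, ?_, ?_⟩
    · simpa using hf0.mul (tendsto_const_nhds : Tendsto (fun _ : ℕ => a) atTop (𝓝 a))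
    · have h1 : Tendsto (fun n => d (f n) * σ a + σ (f n) * d a) atTop
          (𝓝 (x * σ a + σ (0 : A) * d a)) :=
        (hfx.mul tendsto_const_nhds).add (((hσ.tendsto 0).comp hf0).mul tendsto_const_nhds)
      simp only [map_zero, zero_mul, add_zero] at h1
      simpa only [hd] using h1
  set I : TwoSidedIdeal B := TwoSidedIdeal.mk' S zero_mem add_mem neg_mem
    mul_mem_left mul_mem_right with hI
  have hIcoe : (I : Set B) = S := TwoSidedIdeal.coe_mk' _ _ _ _ _ _
  rcases hsimple I (hIcoe ▸ hSclosed) with h0 | huniv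
  · -- separating space is {0} : d is continuous
    left
    rw [hIcoe] at h0
    refine d.continuous_of_seq_closed_graph fun u x y hux huy => ?_
    have h1 : Tendsto (fun n => u n - x) atTop (𝓝 0) := by
      simpa using hux.sub (tendsto_const_nhds : Tendsto (fun _ : ℕ => x) atTop (𝓝 x))
    have h2 : Tendsto (fun n => d (u n - x)) atTop (𝓝 (y - d x)) := by
      simp only [map_sub]
      exact huy.sub tendsto_const_nhds
    have : y - d x ∈ S := (hmem _).mpr ⟨_, h1, h2⟩
    rw [h0] at this
    exact sub_eq_zero.mp (Set.mem_singleton_iff.mp this)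
  · -- separating space is everything : σ is multiplicative
    right
    rw [hIcoe] at huniv
    intro b c
    -- key identity
    have key : ∀ x : A, d x * (σ (b * c) - σ b * σ c) =
        (σ (x * b) - σ x * σ b) * d c := by
      intro x
      have E : d x * σ (b * c) + σ x * (d b * σ c + σ b * d c)
          = (d x * σ b + σ x * d b) * σ c + σ (x * b) * d c := by
        calc d x * σ (b * c) + σ x * (d b * σ c + σ b * d c)
            = d (x * (b * c)) := by rw [hd x (b * c), hd b c]
          _ = d ((x * b) * c) := by rw [mul_assoc]
          _ = (d x * σ b + σ x * d b) * σ c + σ (x * b) * d c := by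
              rw [hd (x * b) c, hd x b]
      linear_combination (norm := noncomm_ring) E
    have hone : (1 : B) ∈ S := huniv ▸ Set.mem_univ 1
    obtain ⟨f, hf0, hf1⟩ := (hmem 1).mp hone
    have hL : Tendsto (fun n => d (f n) * (σ (b * c) - σ b * σ c)) atTop
        (𝓝 (σ (b * c) - σ b * σ c)) := by
      simpa using hf1.mul tendsto_const_nhds
    have hR : Tendsto (fun n => (σ (f n * b) - σ (f n) * σ b) * d c) atTop (𝓝 0) := by
      have hfb : Tendsto (fun n => f n * b) atTop (𝓝 0) := by
        simpa using hf0.mul (tendsto_const_nhds : Tendsto (fun _ : ℕ => b) atTop (𝓝 b))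
      have h1 : Tendsto (fun n => σ (f n * b) - σ (f n) * σ b) atTop (𝓝 0) := by
        have := ((hσ.tendsto 0).comp hfb).sub (((hσ.tendsto 0).comp hf0).mul
          (tendsto_const_nhds : Tendsto (fun _ : ℕ => σ b) atTop (𝓝 (σ b))))
        simpa using this
      simpa using h1.mul (tendsto_const_nhds : Tendsto (fun _ : ℕ => d c) atTop (𝓝 (d c)))
    have heq : (fun n => d (f n) * (σ (b * c) - σ b * σ c)) =
        fun n => (σ (f n * b) - σ (f n) * σ b) * d c := funext fun n => key (f n)
    rw [heq] at hL
    have := tendsto_nhds_unique hL hR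
    exact sub_eq_zero.mp this
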